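/- For every integer n ≥ 3, the integral ∫_{1}^{∞} log(u−1) / u^{n−1} du equals −H(n−3) / (n−2). -/

import Mathlib

open Real MeasureTheory

/-- The `m`-th harmonic number `H(m) = ∑_{i=1}^{m} 1/i`, with `H(0) = 0`. -/
noncomputable def H (m : ℕ) : ℝ := ∑ i ∈ Finset.range m, (1 : ℝ) / (i + 1)

section Aux

variable (q : ℕ)

/-- the antiderivative -/
noncomputable def Faux (u : ℝ) : ℝ :=
  (Real.log (u - 1) * (1 - (u ^ (q + 1))⁻¹) - Real.log u
    + ∑ j ∈ Finset.range q, (u ^ (j + 1))⁻¹ / (j + 1)) / (q + 1)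

lemma geom_aux {u : ℝ} (hu : u ≠ 0) :
    1 - (u ^ (q + 1))⁻¹ = (u - 1) * ∑ j ∈ Finset.range (q + 1), (u ^ (j + 1))⁻¹ := by
  have h := Finset.sum_range_sub' (fun j => (u ^ j)⁻¹) (q + 1)
  simp only [pow_zero, inv_one] at h
  rw [← h, Finset.mul_sum]
  refine Finset.sum_congr rfl fun j _ => ?_
  field_simp
  ring

lemma Faux_hasDerivAt {u : ℝ} (hu : 1 < u) :
    HasDerivAt (Faux q) (Real.log (u - 1) / u ^ (q + 2)) u := by
  have hu0 : u ≠ 0 := by positivity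
  have hu1 : u - 1 ≠ 0 := by linarith [hu]
  have hp : ∀ k : ℕ, u ^ k ≠ 0 := fun k => pow_ne_zero k hu0
  -- derivative of log (u - 1)
  have h1 : HasDerivAt (fun u : ℝ => Real.log (u - 1)) ((u - 1)⁻¹) u := by
    have := ((hasDerivAt_id u).sub_const 1).log hu1
    simpa using this
  -- derivative of 1 - (u^(q+1))⁻¹
  have h2 : HasDerivAt (fun u : ℝ => 1 - (u ^ (q + 1))⁻¹) ((q + 1) / u ^ (q + 2)) u := by
    have := ((hasDerivAt_pow (q + 1) u).inv (hp _)).const_sub 1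
    refine this.congr_deriv ?_
    simp only [Nat.add_sub_cancel, Nat.cast_add, Nat.cast_one]
    field_simp
    ring
  -- derivative of each summand
  have h4 : ∀ j : ℕ, HasDerivAt (fun u : ℝ => (u ^ (j + 1))⁻¹ / (j + 1))
      (-(u ^ (j + 2))⁻¹) u := by
    intro j
    have := (((hasDerivAt_pow (j + 1) u).inv (hp _)).div_const ((j : ℝ) + 1))
    refine this.congr_deriv ?_
    have hj : ((j : ℝ) + 1) ≠ 0 := by positivity
    simp only [Nat.add_sub_cancel, Nat.cast_add, Nat.cast_one]
    field_simp
    ring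
  have hG : HasDerivAt (fun u : ℝ => Real.log (u - 1) * (1 - (u ^ (q + 1))⁻¹) - Real.log u
      + ∑ j ∈ Finset.range q, (u ^ (j + 1))⁻¹ / (j + 1))
      (((u - 1)⁻¹ * (1 - (u ^ (q + 1))⁻¹) + Real.log (u - 1) * ((q + 1) / u ^ (q + 2)))
        - u⁻¹ + ∑ j ∈ Finset.range q, -(u ^ (j + 2))⁻¹) u := by
    exact ((h1.mul h2).sub (hasDerivAt_log hu0)).add
      (HasDerivAt.fun_sum fun j _ => h4 j)
  have hF := hG.div_const ((q : ℝ) + 1)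
  refine hF.congr_deriv ?_
  have hA := geom_aux q hu0
  rw [hA, inv_mul_cancel_left₀ hu1, Finset.sum_range_succ' (fun j => (u ^ (j + 1))⁻¹) q]
  simp only [Finset.sum_neg_distrib, zero_add, pow_one,
    show ∀ k : ℕ, k + 1 + 1 = k + 2 from fun k => rfl]
  have hq1 : ((q : ℝ) + 1) ≠ 0 := by positivity
  field_simp
  ring

lemma Faux_one : Faux q 1 = (∑ j ∈ Finset.range q, (1 : ℝ) / (j + 1)) / (q + 1) := by
  simp [Faux]

lemma Faux_contWithin : ContinuousWithinAt (Faux q) (Set.Ici 1) 1 := by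
  set F₂ : ℝ → ℝ := fun u =>
    (((u - 1) * Real.log (u - 1)) * (∑ j ∈ Finset.range (q + 1), (u ^ (j + 1))⁻¹)
      - Real.log u + ∑ j ∈ Finset.range q, (u ^ (j + 1))⁻¹ / (j + 1)) / (q + 1) with hF₂
  have hsum : ∀ m : ℕ, ContinuousAt (fun u : ℝ => ∑ j ∈ Finset.range m, (u ^ (j + 1))⁻¹) 1 := by
    intro m
    apply tendsto_finset_sum
    intro j _
    exact (continuousAt_pow _ _).inv₀ (by norm_num)
  have hsum' : ContinuousAt (fun u : ℝ => ∑ j ∈ Finset.range q, (u ^ (j + 1))⁻¹ / ((j:ℝ)+1)) 1 := by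
    apply tendsto_finset_sum
    intro j _
    exact ((continuousAt_pow _ _).inv₀ (by norm_num)).div_const _
  have hml : Continuous fun u : ℝ => (u - 1) * Real.log (u - 1) :=
    Real.continuous_mul_log.comp (continuous_id.sub continuous_const)
  have hc2 : ContinuousWithinAt F₂ (Set.Ici 1) 1 := by
    apply ContinuousAt.continuousWithinAt
    exact (((hml.continuousAt.mul (hsum (q+1))).sub
      (Real.continuousAt_log (by norm_num))).add hsum').div_const _
  apply hc2.congr
  · intro u hu
    have hu0 : u ≠ 0 := by
      have : (1:ℝ) ≤ u := hu
      positivity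
    simp only [Faux, hF₂]
    rw [geom_aux q hu0]
    ring
  · simp only [Faux, hF₂]
    norm_num

lemma Faux_tendsto : Filter.Tendsto (Faux q) Filter.atTop (nhds 0) := by
  have Ta : Filter.Tendsto (fun u : ℝ => Real.log (u - 1) - Real.log u)
      Filter.atTop (nhds 0) := by
    have := Real.tendsto_log_comp_add_sub_log (-1)
    simpa [sub_eq_add_neg] using this
  have Th : Filter.Tendsto (fun u : ℝ => Real.log u / u) Filter.atTop (nhds 0) :=
    Real.isLittleO_log_id_atTop.tendsto_div_nhds_zero
  have Tb : Filter.Tendsto (fun u : ℝ => Real.log (u - 1) * (u ^ (q + 1))⁻¹)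
      Filter.atTop (nhds 0) := by
    apply tendsto_of_tendsto_of_tendsto_of_le_of_le' tendsto_const_nhds Th
    · filter_upwards [Filter.eventually_ge_atTop (2:ℝ)] with u hu
      have h1 : (0:ℝ) ≤ Real.log (u - 1) := Real.log_nonneg (by linarith)
      have h2 : (0:ℝ) ≤ (u ^ (q + 1))⁻¹ := by positivity
      positivity
    · filter_upwards [Filter.eventually_ge_atTop (2:ℝ)] with u hu
      have hu0 : (0:ℝ) < u := by linarith
      have h1 : Real.log (u - 1) ≤ Real.log u := Real.log_le_log (by linarith) (by linarith)
      have h2 : (u ^ (q + 1))⁻¹ ≤ u⁻¹ := by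
        apply inv_anti₀ (by linarith)
        calc u = u ^ 1 := (pow_one u).symm
        _ ≤ u ^ (q + 1) := pow_le_pow_right₀ (by linarith) (by omega)
      rw [div_eq_mul_inv]
      exact mul_le_mul h1 h2 (by positivity) (Real.log_nonneg (by linarith))
  have Tc : Filter.Tendsto (fun u : ℝ => ∑ j ∈ Finset.range q, (u ^ (j + 1))⁻¹ / ((j:ℝ) + 1))
      Filter.atTop (nhds 0) := by
    have : Filter.Tendsto (fun u : ℝ => ∑ j ∈ Finset.range q, (u ^ (j + 1))⁻¹ / ((j:ℝ) + 1))
        Filter.atTop (nhds (∑ j ∈ Finset.range q, 0)) := by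
      apply tendsto_finset_sum
      intro j _
      have : Filter.Tendsto (fun u : ℝ => (u ^ (j + 1))⁻¹) Filter.atTop (nhds 0) :=
        (Filter.tendsto_pow_atTop (by omega)).inv_tendsto_atTop
      simpa using this.div_const ((j:ℝ) + 1)
    simpa using this
  have : Filter.Tendsto (fun u : ℝ => (Real.log (u - 1) - Real.log u
      - Real.log (u - 1) * (u ^ (q + 1))⁻¹
      + ∑ j ∈ Finset.range q, (u ^ (j + 1))⁻¹ / ((j:ℝ) + 1)) / ((q:ℝ) + 1))
      Filter.atTop (nhds ((0 - 0 + 0) / ((q:ℝ)+1))) := ((Ta.sub Tb).add Tc).div_const _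
  simp only [sub_zero, zero_add, zero_div] at this
  apply this.congr
  intro u
  simp only [Faux]
  ring

lemma integrable_aux :
    IntegrableOn (fun u : ℝ => Real.log (u - 1) / u ^ (q + 2)) (Set.Ioi 1) := by
  have hmeas : AEStronglyMeasurable (fun u : ℝ => Real.log (u - 1) / u ^ (q + 2)) := by
    apply Measurable.aestronglyMeasurable
    exact (Real.measurable_log.comp (measurable_id.sub measurable_const)).div
      (measurable_id.pow_const _)
  have h12 : IntegrableOn (fun u : ℝ => Real.log (u - 1) / u ^ (q + 2)) (Set.Ioc 1 2) := by
    -- dominate by -log (u - 1)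
    have hlog : IntegrableOn (fun u : ℝ => -Real.log (u - 1)) (Set.Ioc 1 2) := by
      apply intervalIntegral.integrableOn_deriv_of_nonneg
        (g := fun u => (u - 1) - (u - 1) * Real.log (u - 1))
      · apply Continuous.continuousOn
        exact (continuous_id.sub continuous_const).sub
          (Real.continuous_mul_log.comp (continuous_id.sub continuous_const))
      · intro x hx
        have hx1 : x - 1 ≠ 0 := sub_ne_zero.mpr hx.1.ne'
        have hm : HasDerivAt (fun u : ℝ => (u - 1) * Real.log (u - 1))
            ((Real.log (x - 1) + 1) * 1) x := by
          exact (Real.hasDerivAt_mul_log hx1).comp x ((hasDerivAt_id x).sub_const 1)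
        have := ((hasDerivAt_id x).sub_const 1).sub hm
        refine this.congr_deriv ?_
        ring
      · intro x hx
        have h1 : Real.log (x - 1) ≤ 0 := Real.log_nonpos (by linarith [hx.1]) (by linarith [hx.2])
        linarith
    apply Integrable.mono hlog (hmeas.restrict)
    rw [ae_restrict_iff' measurableSet_Ioc]
    filter_upwards with u hu
    have hu1 : (1:ℝ) < u := hu.1
    have hupos : (0:ℝ) < u := by linarith
    have h1 : (1:ℝ) ≤ u ^ (q + 2) := one_le_pow₀ (by linarith)
    rw [Real.norm_eq_abs, Real.norm_eq_abs, abs_neg, abs_div,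
      abs_of_pos (by positivity : (0:ℝ) < u ^ (q+2)), div_le_iff₀ (by positivity)]
    exact le_mul_of_one_le_right (abs_nonneg _) h1
  have h2i : IntegrableOn (fun u : ℝ => Real.log (u - 1) / u ^ (q + 2)) (Set.Ioi 2) := by
    have hint : IntegrableOn (fun u : ℝ => 2 * u ^ (-(3/2) : ℝ)) (Set.Ioi 2) :=
      (integrableOn_Ioi_rpow_of_lt (by norm_num) (by norm_num : (0:ℝ) < 2)).const_mul 2
    apply Integrable.mono hint (hmeas.restrict)
    rw [ae_restrict_iff' measurableSet_Ioi]
    filter_upwards with u hu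
    have hu2 : (2:ℝ) < u := hu
    have hu0 : (0:ℝ) < u := by linarith
    have hlog : Real.log (u - 1) ≤ 2 * Real.sqrt u := by
      have h1 : Real.log (u - 1) ≤ Real.log u := Real.log_le_log (by linarith) (by linarith)
      have h2 : Real.log u = 2 * Real.log (Real.sqrt u) := by
        rw [Real.log_sqrt hu0.le]; ring
      have h3 : Real.log (Real.sqrt u) ≤ Real.sqrt u - 1 :=
        Real.log_le_sub_one_of_pos (Real.sqrt_pos.mpr hu0)
      nlinarith [Real.sqrt_nonneg u]
    have hlpos : (0:ℝ) ≤ Real.log (u - 1) := Real.log_nonneg (by linarith)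
    rw [Real.norm_eq_abs, Real.norm_eq_abs, abs_of_nonneg (by positivity),
      abs_of_nonneg (by positivity : (0:ℝ) ≤ 2 * u ^ (-(3/2) : ℝ))]
    have hpow : (u:ℝ) ^ 2 ≤ u ^ (q + 2) := pow_le_pow_right₀ (by linarith) (by omega)
    calc Real.log (u - 1) / u ^ (q + 2) ≤ (2 * Real.sqrt u) / u ^ 2 :=
          div_le_div₀ (by positivity) hlog (by positivity) hpow
      _ = 2 * u ^ (-(3/2) : ℝ) := by
          rw [Real.sqrt_eq_rpow]
          rw [show (u:ℝ) ^ 2 = u ^ (2:ℝ) by rw [← Real.rpow_natCast u 2]; norm_num]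
          rw [mul_div_assoc, ← Real.rpow_sub hu0]
          norm_num
  have : Set.Ioi (1:ℝ) = Set.Ioc 1 2 ∪ Set.Ioi 2 := (Set.Ioc_union_Ioi_eq_Ioi (by norm_num)).symm
  rw [this]
  exact h12.union h2i

lemma key (q : ℕ) :
    (∫ u in Set.Ioi (1 : ℝ), Real.log (u - 1) / u ^ (q + 2)) =
      -(∑ j ∈ Finset.range q, (1 : ℝ) / (j + 1)) / ((q : ℝ) + 1) := by
  have := MeasureTheory.integral_Ioi_of_hasDerivAt_of_tendsto
    (Faux_contWithin q) (fun x hx => Faux_hasDerivAt q hx) (integrable_aux q)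
    (Faux_tendsto q)
  rw [this, Faux_one]
  ring

end Aux

/-- For every integer `n ≥ 3`, `∫_{1}^{∞} log(u−1) / u^(n−1) du = −H(n−3) / (n−2)`. -/
theorem integral_log_sub_one_div_pow (n : ℕ) (hn : 3 ≤ n) :
    (∫ u in Set.Ioi (1 : ℝ), Real.log (u - 1) / u ^ (n - 1)) =
      -H (n - 3) / ((n : ℝ) - 2) := by
  obtain ⟨q, rfl⟩ : ∃ q, n = q + 3 := ⟨n - 3, by omega⟩
  have h1 : q + 3 - 1 = q + 2 := by omega
  have h2 : q + 3 - 3 = q := by omega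
  rw [h1, h2, key q, H]
  push_cast
  rw [show (q:ℝ) + 3 - 2 = (q:ℝ) + 1 by ring]
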